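/- With f_r as in the OptAsYouGoLearning drift (f_r(V) = E[min{C(r,W), −V(1)+V(r+1)}] − V(r) for r < B, f_B(V) = E[C(B,W)] − V(B)), the scaled limits satisfy: for r < B, lim_{c→∞} f_r(cV)/c = min{0, −V(1) + V(r+1)} − V(r), and lim_{c→∞} f_B(cV)/c = −V(B); moreover for each fixed V the map c ↦ f_r(cV)/c is nonincreasing on [1, ∞), and the convergence is uniform on compact subsets of ℝ^B. -/

import Mathlib

open MeasureTheory Filter Topology

/-- Scaling limits of the OptAsYouGoLearning drift: for `r < B`,
`f_r(cV)/c → min{0, −V(1)+V(r+1)} − V(r)` and `f_B(cV)/c → −V(B)` as `c → ∞`;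
moreover `c ↦ f_r(cV)/c` is nonincreasing on `[1,∞)`, and the convergence is
uniform over bounded sets of vectors `V` (hence over compacts of `ℝ^B`). -/
theorem stmt_15 {Ω : Type*} [MeasurableSpace Ω] (μ : Measure Ω)
    [IsProbabilityMeasure μ] (B : ℕ) (hB : 2 ≤ B) (C : ℕ → Ω → ℝ) (Cmax : ℝ)
    (hmeas : ∀ r, Measurable (C r))
    (hbdd : ∀ r ω, C r ω ∈ Set.Icc (0 : ℝ) Cmax)
    (f : ℕ → (ℕ → ℝ) → ℝ)
    (hf : ∀ (V : ℕ → ℝ) (r : ℕ), 1 ≤ r → r ≤ B - 1 →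
      f r V = (∫ ω, min (C r ω) (-(V 1) + V (r + 1)) ∂μ) - V r)
    (hfB : ∀ V : ℕ → ℝ, f B V = (∫ ω, C B ω ∂μ) - V B) :
    (∀ (V : ℕ → ℝ) (r : ℕ), 1 ≤ r → r ≤ B - 1 →
      Tendsto (fun c : ℝ => f r (fun i => c * V i) / c) atTop
        (𝓝 (min 0 (-(V 1) + V (r + 1)) - V r))) ∧
    (∀ V : ℕ → ℝ,
      Tendsto (fun c : ℝ => f B (fun i => c * V i) / c) atTop (𝓝 (-(V B)))) ∧
    (∀ (V : ℕ → ℝ) (r : ℕ), 1 ≤ r → r ≤ B →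
      AntitoneOn (fun c : ℝ => f r (fun i => c * V i) / c) (Set.Ici 1)) ∧
    (∀ (r : ℕ), 1 ≤ r → r ≤ B - 1 → ∀ R : ℝ,
      TendstoUniformlyOn
        (fun (c : ℝ) (V : ℕ → ℝ) => f r (fun i => c * V i) / c)
        (fun V : ℕ → ℝ => min 0 (-(V 1) + V (r + 1)) - V r)
        atTop
        {V : ℕ → ℝ | ∀ i, 1 ≤ i → i ≤ B → |V i| ≤ R}) := by
  -- basic facts
  have hΩ : Nonempty Ω := by
    by_contra h
    rw [not_nonempty_iff] at h
    have h1 : μ Set.univ = 1 := measure_univ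
    rw [Set.univ_eq_empty_iff.2 h] at h1
    simp at h1
  have hCmax0 : 0 ≤ Cmax := by
    obtain ⟨ω⟩ := hΩ
    exact le_trans (hbdd 0 ω).1 (hbdd 0 ω).2
  have hint : ∀ r, Integrable (C r) μ := fun r =>
    ⟨(hmeas r).aestronglyMeasurable,
      HasFiniteIntegral.of_bounded (C := Cmax) (Filter.Eventually.of_forall fun ω => by
        rw [Real.norm_eq_abs, abs_of_nonneg (hbdd r ω).1]; exact (hbdd r ω).2)⟩
  have hintmin : ∀ (r : ℕ) (c a : ℝ), Integrable (fun ω => min (C r ω / c) a) μ := by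
    intro r c a
    exact ((hint r).div_const c).inf (integrable_const a)
  -- value formula for r ≤ B - 1
  have hval : ∀ (V : ℕ → ℝ) (r : ℕ), 1 ≤ r → r ≤ B - 1 → ∀ c : ℝ, 0 < c →
      f r (fun i => c * V i) / c
        = (∫ ω, min (C r ω / c) (-(V 1) + V (r + 1)) ∂μ) - V r := by
    intro V r h1 h2 c hc
    rw [hf _ r h1 h2]
    have hpt : ∀ ω, min (C r ω) (-(c * V 1) + c * V (r + 1))
        = c * min (C r ω / c) (-(V 1) + V (r + 1)) := by
      intro ω
      rw [mul_min_of_nonneg _ _ hc.le, mul_div_cancel₀ _ hc.ne']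
      ring_nf
    simp only [hpt]
    rw [MeasureTheory.integral_const_mul]
    field_simp
  -- value formula for r = B
  have hvalB : ∀ (V : ℕ → ℝ) (c : ℝ), 0 < c →
      f B (fun i => c * V i) / c = (∫ ω, C B ω ∂μ) / c - V B := by
    intro V c hc
    rw [hfB]
    field_simp
  -- key estimate for r ≤ B - 1
  have hest : ∀ (V : ℕ → ℝ) (r : ℕ), 1 ≤ r → r ≤ B - 1 → ∀ c : ℝ, 0 < c →
      |f r (fun i => c * V i) / c - (min 0 (-(V 1) + V (r + 1)) - V r)| ≤ Cmax / c := by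
    intro V r h1 h2 c hc
    set a := -(V 1) + V (r + 1) with ha
    rw [hval V r h1 h2 c hc]
    have heq : (∫ ω, min (C r ω / c) a ∂μ) - V r - (min 0 a - V r)
        = ∫ ω, (min (C r ω / c) a - min 0 a) ∂μ := by
      rw [integral_sub (hintmin r c a) (integrable_const _), integral_const, probReal_univ,
        one_smul]
      ring
    rw [heq, ← Real.norm_eq_abs]
    have hb := MeasureTheory.norm_integral_le_of_norm_le_const (μ := μ)
      (f := fun ω => min (C r ω / c) a - min 0 a) (C := Cmax / c)
      (Filter.Eventually.of_forall fun ω => by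
        rw [Real.norm_eq_abs]
        calc |min (C r ω / c) a - min 0 a| ≤ max |C r ω / c - 0| |a - a| :=
              abs_min_sub_min_le_max _ _ _ _
          _ ≤ Cmax / c := by
              rw [sub_self, abs_zero, sub_zero, max_eq_left (abs_nonneg _),
                abs_of_nonneg (div_nonneg (hbdd r ω).1 hc.le)]
              gcongr
              exact (hbdd r ω).2)
    simpa using hb
  -- estimate for r = B
  have hestB : ∀ (V : ℕ → ℝ) (c : ℝ), 0 < c →
      |f B (fun i => c * V i) / c - (-(V B))| ≤ Cmax / c := by
    intro V c hc
    rw [hvalB V c hc]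
    have h1 : (∫ ω, C B ω ∂μ) / c - V B - (-(V B)) = (∫ ω, C B ω ∂μ) / c := by ring
    rw [h1, abs_of_nonneg (div_nonneg (integral_nonneg fun ω => (hbdd B ω).1) hc.le)]
    gcongr
    calc (∫ ω, C B ω ∂μ) ≤ ∫ _, Cmax ∂μ :=
          integral_mono (hint B) (integrable_const _) fun ω => (hbdd B ω).2
      _ = Cmax := by simp
  -- Cmax / c → 0
  have hC0 : Tendsto (fun c : ℝ => Cmax / c) atTop (𝓝 0) :=
    tendsto_const_nhds.div_atTop tendsto_id
  -- generic tendsto from estimate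
  have tend_aux : ∀ (g : ℝ → ℝ) (L : ℝ), (∀ c : ℝ, 0 < c → |g c - L| ≤ Cmax / c) →
      Tendsto g atTop (𝓝 L) := by
    intro g L h
    have h2 : Tendsto (fun c => g c - L) atTop (𝓝 0) := by
      apply squeeze_zero_norm' _ hC0
      filter_upwards [eventually_gt_atTop (0 : ℝ)] with c hc
      simpa [Real.norm_eq_abs] using h c hc
    have := h2.add_const L
    simpa using this
  refine ⟨?_, ?_, ?_, ?_⟩
  · intro V r h1 h2
    exact tend_aux _ _ (hest V r h1 h2)
  · intro V
    exact tend_aux _ _ (hestB V)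
  · -- antitone
    intro V r h1 h2
    rcases eq_or_lt_of_le h2 with rfl | hlt
    · -- r = B
      intro c hc c' hc' hcc
      simp only
      rw [hvalB V c (lt_of_lt_of_le zero_lt_one hc),
        hvalB V c' (lt_of_lt_of_le zero_lt_one hc')]
      have hI : (0 : ℝ) ≤ ∫ ω, C r ω ∂μ := integral_nonneg fun ω => (hbdd r ω).1
      have : (∫ ω, C r ω ∂μ) / c' ≤ (∫ ω, C r ω ∂μ) / c := by
        gcongr
        exact lt_of_lt_of_le zero_lt_one hc
      linarith
    · -- r ≤ B - 1
      have h2' : r ≤ B - 1 := Nat.le_sub_one_of_lt hlt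
      intro c hc c' hc' hcc
      have hc0 : (0 : ℝ) < c := lt_of_lt_of_le zero_lt_one hc
      have hc0' : (0 : ℝ) < c' := lt_of_lt_of_le zero_lt_one hc'
      simp only
      rw [hval V r h1 h2' c hc0, hval V r h1 h2' c' hc0']
      have hmono : (∫ ω, min (C r ω / c') (-(V 1) + V (r + 1)) ∂μ)
          ≤ ∫ ω, min (C r ω / c) (-(V 1) + V (r + 1)) ∂μ := by
        apply integral_mono (hintmin r c' _) (hintmin r c _)
        intro ω
        apply min_le_min _ le_rfl
        gcongr
        exact (hbdd r ω).1
      linarith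
  · -- uniform convergence
    intro r h1 h2 R
    rw [Metric.tendstoUniformlyOn_iff]
    intro ε hε
    filter_upwards [eventually_gt_atTop (0 : ℝ), hC0.eventually_lt_const hε] with c hc hlt V _
    rw [Real.dist_eq, abs_sub_comm]
    exact lt_of_le_of_lt (hest V r h1 h2 c hc) hlt
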